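/- There are infinitely many positive integers that cannot be expressed as the sum of two squares and at most one power of 2. -/
import Mathlib


/-- A natural number `m` is a sum of two squares and at most one power of 2. -/
def IsSumTwoSquaresAddAtMostOnePow (m : ℕ) : Prop :=
  ∃ x y : ℤ, (m : ℤ) = x ^ 2 + y ^ 2 ∨ ∃ a : ℕ, (m : ℤ) = x ^ 2 + y ^ 2 + 2 ^ a

lemma key (k : ℕ) : ¬ IsSumTwoSquaresAddAtMostOnePow (72 * k + 23) := by
  rintro ⟨x, y, h | ⟨a, h⟩⟩
  · -- mod 8 : 7 is not a sum of two squares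
    have h8 : ((72 * k + 23 : ℕ) : ZMod 8) = (x : ZMod 8) ^ 2 + (y : ZMod 8) ^ 2 := by
      have := congrArg (Int.cast : ℤ → ZMod 8) h
      push_cast at this ⊢
      simpa using this
    have hL : ((72 * k + 23 : ℕ) : ZMod 8) = 7 := by
      push_cast
      have : (72 : ZMod 8) = 0 := by decide
      rw [this]; ring_nf; decide
    rw [hL] at h8
    have : ∀ u v : ZMod 8, 7 ≠ u ^ 2 + v ^ 2 := by decide
    exact this _ _ h8
  · match a with
    | 0 =>
      have h8 : ((72 * k + 23 : ℕ) : ZMod 8) = (x : ZMod 8) ^ 2 + (y : ZMod 8) ^ 2 + 1 := by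
        have := congrArg (Int.cast : ℤ → ZMod 8) h
        push_cast at this ⊢
        simpa using this
      have hL : ((72 * k + 23 : ℕ) : ZMod 8) = 7 := by
        push_cast
        have : (72 : ZMod 8) = 0 := by decide
        rw [this]; ring_nf; decide
      rw [hL] at h8
      have : ∀ u v : ZMod 8, 7 ≠ u ^ 2 + v ^ 2 + 1 := by decide
      exact this _ _ h8
    | 1 =>
      -- mod 9 : n ≡ 5, so x² + y² ≡ 3 (mod 9), impossible
      have h9 : ((72 * k + 23 : ℕ) : ZMod 9) = (x : ZMod 9) ^ 2 + (y : ZMod 9) ^ 2 + 2 := by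
        have := congrArg (Int.cast : ℤ → ZMod 9) h
        push_cast at this ⊢
        simpa using this
      have hL : ((72 * k + 23 : ℕ) : ZMod 9) = 5 := by
        push_cast
        have : (72 : ZMod 9) = 0 := by decide
        rw [this]; ring_nf; decide
      rw [hL] at h9
      have : ∀ u v : ZMod 9, 5 ≠ u ^ 2 + v ^ 2 + 2 := by decide
      exact this _ _ h9
    | (b + 2) =>
      have h8 : ((72 * k + 23 : ℕ) : ZMod 8)
          = (x : ZMod 8) ^ 2 + (y : ZMod 8) ^ 2 + 4 * (2 : ZMod 8) ^ b := by
        have := congrArg (Int.cast : ℤ → ZMod 8) h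
        push_cast at this ⊢
        rw [this]; ring_nf
      have hL : ((72 * k + 23 : ℕ) : ZMod 8) = 7 := by
        push_cast
        have : (72 : ZMod 8) = 0 := by decide
        rw [this]; ring_nf; decide
      rw [hL] at h8
      have : ∀ u v w : ZMod 8, 7 ≠ u ^ 2 + v ^ 2 + 4 * w := by decide
      exact this _ _ _ h8

theorem infinite_not_one_pow :
    {n : ℕ | 0 < n ∧ ¬ IsSumTwoSquaresAddAtMostOnePow n}.Infinite := by
  apply Set.infinite_of_injective_forall_mem (f := fun k : ℕ => 72 * k + 23)
  · intro a b hab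
    simpa using hab
  · intro k
    exact ⟨by omega, key k⟩
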